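/- Let β ∈ (0,1), ρ = CVaR_β, ρ₀ > 0, and assume the law of ξ has no atom. If esssup ξ = +∞, then for every c ∈ ℝ with P(ξ > c) > 0 one has Δ({ξ ≤ c}) = −∞; in particular there exists A ∈ 𝓕 with Δ(A) = −∞. -/

import Mathlib

open MeasureTheory Set Filter
open scoped Classical ENNReal

noncomputable section

variable {Ω : Type*} [MeasurableSpace Ω]

/-- The set `H₂(A)`. -/
def H2 (P : Measure Ω) (ξ : Ω → ℝ) (ρ : (Ω → ℝ) → EReal) (ρ₀ : ℝ) (A : Set Ω) :
    Set (Ω → ℝ) :=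
  {Y | Integrable (fun ω => ξ ω * Y ω) P ∧ ρ Y ≤ (ρ₀ : EReal) ∧
    (∀ᵐ ω ∂P, ω ∈ A → Y ω = 0) ∧ (∀ᵐ ω ∂P, ω ∉ A → Y ω ≤ 0)}

/-- The set of values `{E[ξ Y] : Y ∈ H₂(A)}`; `Δ(A)` is its infimum. -/
def DSet (P : Measure Ω) (ξ : Ω → ℝ) (ρ : (Ω → ℝ) → EReal) (ρ₀ : ℝ) (A : Set Ω) : Set ℝ :=
  (fun Y => ∫ ω, ξ ω * Y ω ∂P) '' H2 P ξ ρ ρ₀ A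

/-- Generalized inverse distribution function `F_X^{-1}(t) = inf {x : P(X ≤ x) ≥ t}`. -/
def Finv (P : Measure Ω) (X : Ω → ℝ) (t : ℝ) : ℝ :=
  sInf {x : ℝ | ENNReal.ofReal t ≤ P {ω | X ω ≤ x}}

/-- `CVaR_β(X) = -(1/β) ∫₀^β F_X^{-1}(u) du`, with value `+∞` when not defined. -/
def cvar (P : Measure Ω) (β : ℝ) (X : Ω → ℝ) : EReal :=
  if IntegrableOn (Finv P X) (Set.Ioo 0 β) volume
  then ((-(β⁻¹ * ∫ t in Set.Ioo (0:ℝ) β, Finv P X t) : ℝ) : EReal)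
  else ⊤


lemma cvar_indicator (P : Measure Ω) [IsProbabilityMeasure P]
    (B : Set Ω) (a β : ℝ) (ha : 0 < a) (hβ0 : 0 < β) (hβ1 : β < 1)
    (hp0 : 0 < P B) (hpβ : (P B).toReal < β) :
    cvar P β (fun ω => if ω ∈ B then -a else 0) =
      ((a * (P B).toReal / β : ℝ) : EReal) := by
  set Y : Ω → ℝ := fun ω => if ω ∈ B then -a else 0 with hY
  set p' : ℝ := (P B).toReal with hp'
  have hPBne : P B ≠ ⊤ := (measure_lt_top P B).ne
  have hp'0 : 0 < p' := ENNReal.toReal_pos hp0.ne' hPBne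
  -- level sets of Y
  have hset_ge : ∀ x : ℝ, -a ≤ x → B ⊆ {ω | Y ω ≤ x} := by
    intro x hx ω hω; simp only [Y, mem_setOf_eq, if_pos hω]; exact hx
  have hset_lt : ∀ x : ℝ, x < -a → {ω | Y ω ≤ x} = ∅ := by
    intro x hx
    ext ω; simp only [mem_setOf_eq, mem_empty_iff_false, iff_false, not_le, Y]
    split
    · exact hx
    · linarith
  have hset_neg : ∀ x : ℝ, x < 0 → {ω | Y ω ≤ x} ⊆ B := by
    intro x hx ω hω
    by_contra hωB
    simp only [mem_setOf_eq, Y, if_neg hωB] at hω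
    linarith
  have hset_nonneg : ∀ x : ℝ, 0 ≤ x → {ω | Y ω ≤ x} = univ := by
    intro x hx
    ext ω; simp only [mem_setOf_eq, mem_univ, iff_true, Y]
    split
    · linarith
    · exact hx
  -- Finv on (0, β)
  have hFinv : EqOn (Finv P Y) (fun t => if t ≤ p' then -a else 0) (Ioo 0 β) := by
    intro t ht
    obtain ⟨ht0, htβ⟩ := ht
    show Finv P Y t = if t ≤ p' then -a else 0
    by_cases htp : t ≤ p'
    · rw [if_pos htp]
      have hS : {x : ℝ | ENNReal.ofReal t ≤ P {ω | Y ω ≤ x}} = Ici (-a) := by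
        ext x
        simp only [mem_setOf_eq, mem_Ici]
        constructor
        · intro hx
          by_contra hxa
          push_neg at hxa
          rw [hset_lt x hxa, measure_empty] at hx
          exact (ENNReal.ofReal_pos.mpr ht0).not_ge hx
        · intro hx
          calc ENNReal.ofReal t ≤ P B := by
                rw [← ENNReal.ofReal_toReal hPBne]
                exact ENNReal.ofReal_le_ofReal htp
            _ ≤ P {ω | Y ω ≤ x} := measure_mono (hset_ge x hx)
      rw [Finv, hS, csInf_Ici]
    · push_neg at htp
      rw [if_neg (not_le.mpr htp)]
      have hS : {x : ℝ | ENNReal.ofReal t ≤ P {ω | Y ω ≤ x}} = Ici 0 := by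
        ext x
        simp only [mem_setOf_eq, mem_Ici]
        constructor
        · intro hx
          by_contra hx0
          push_neg at hx0
          have : P {ω | Y ω ≤ x} ≤ P B := measure_mono (hset_neg x hx0)
          have h1 : P B < ENNReal.ofReal t := by
            rw [← ENNReal.ofReal_toReal hPBne]
            exact ENNReal.ofReal_lt_ofReal_iff ht0 |>.mpr htp
          exact absurd hx (not_le.mpr (lt_of_le_of_lt this h1))
        · intro hx
          rw [hset_nonneg x hx, measure_univ]
          exact ENNReal.ofReal_le_one.mpr (le_of_lt (htβ.trans hβ1))
      rw [Finv, hS, csInf_Ici]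
  -- integrability of the step function
  have hgind : (fun t : ℝ => if t ≤ p' then -a else 0) =
      (Iic p').indicator (fun _ => -a) := by
    funext t; rw [Set.indicator_apply]; simp [mem_Iic]
  have hgint : IntegrableOn (fun t : ℝ => if t ≤ p' then -a else 0) (Ioo 0 β) volume := by
    rw [hgind]
    exact (integrableOn_const measure_Ioo_lt_top.ne).indicator measurableSet_Iic
  have hFint : IntegrableOn (Finv P Y) (Ioo 0 β) volume :=
    hgint.congr_fun (fun t ht => (hFinv ht).symm) measurableSet_Ioo
  -- the integral
  have hinter : Iic p' ∩ Ioo 0 β = Ioc 0 p' := by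
    ext x
    simp only [mem_inter_iff, mem_Iic, mem_Ioo, mem_Ioc]
    constructor
    · rintro ⟨h1, h2, _⟩; exact ⟨h2, h1⟩
    · rintro ⟨h1, h2⟩; exact ⟨h2, h1, lt_of_le_of_lt h2 hpβ⟩
  have hint : ∫ t in Ioo (0:ℝ) β, Finv P Y t = -a * p' := by
    rw [setIntegral_congr_fun measurableSet_Ioo hFinv, hgind,
      integral_indicator measurableSet_Iic, setIntegral_const,
      measureReal_def, Measure.restrict_apply measurableSet_Iic, hinter,
      Real.volume_Ioc, ENNReal.toReal_ofReal (by linarith), smul_eq_mul]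
    ring
  rw [cvar, if_pos hFint, hint]
  congr 1
  field_simp

lemma EReal_eq_bot_of_forall_le (y : EReal) (h : ∀ M : ℝ, y ≤ (M : EReal)) : y = ⊥ := by
  induction y using EReal.rec with
  | bot => rfl
  | coe t =>
    have := h (t - 1)
    rw [EReal.coe_le_coe_iff] at this
    linarith
  | top => simpa using h 0


theorem stmt17
    (P : Measure Ω) [IsProbabilityMeasure P]
    (ξ : Ω → ℝ) (hξm : Measurable ξ)
    (hξpos : ∀ᵐ ω ∂P, 0 < ξ ω)
    (hξint : Integrable ξ P) (hξ1 : (∫ ω, ξ ω ∂P) = 1)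
    (β : ℝ) (hβ0 : 0 < β) (hβ1 : β < 1)
    (ρ₀ : ℝ) (hρ₀ : 0 < ρ₀)
    (hnoatom : ∀ r : ℝ, P {ω | ξ ω = r} = 0)
    (hsup : essSup (fun ω => ((ξ ω : EReal))) P = ⊤) :
    (∀ c : ℝ, 0 < P {ω | c < ξ ω} →
      sInf ((fun r : ℝ => (r : EReal)) ''
        ((fun Y => ∫ ω, ξ ω * Y ω ∂P) '' H2 P ξ (cvar P β) ρ₀ {ω | ξ ω ≤ c})) = ⊥) ∧
    ∃ A : Set Ω, MeasurableSet A ∧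
      sInf ((fun r : ℝ => (r : EReal)) ''
        ((fun Y => ∫ ω, ξ ω * Y ω ∂P) '' H2 P ξ (cvar P β) ρ₀ A)) = ⊥ := by
  -- positivity of tail probabilities
  have hgt : ∀ d : ℝ, 0 < P {ω | d < ξ ω} := by
    intro d
    by_contra h
    have h0 : P {ω | d < ξ ω} = 0 := le_antisymm (not_lt.mp h) zero_le
    have hae : ∀ᵐ ω ∂P, ξ ω ≤ d := by
      rw [ae_iff]
      convert h0 using 2
      ext ω; simp [not_le]
    have hle : essSup (fun ω => (ξ ω : EReal)) P ≤ (d : EReal) :=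
      essSup_le_of_ae_le _ (hae.mono fun ω hω => EReal.coe_le_coe_iff.mpr hω)
    rw [hsup] at hle
    exact absurd hle (by simp)
  -- tail sets
  set s : ℕ → Set Ω := fun n => {ω | (n : ℝ) < ξ ω} with hs
  have hsmeas : ∀ n, MeasurableSet (s n) :=
    fun n => measurableSet_lt measurable_const hξm
  have hanti : Antitone s := by
    intro n m hnm ω hω
    have : (n : ℝ) ≤ (m : ℝ) := Nat.cast_le.mpr hnm
    exact lt_of_le_of_lt this hω
  have hiInter : ⋂ n, s n = ∅ := by
    ext ω
    simp only [mem_iInter, mem_empty_iff_false, iff_false, not_forall, hs, mem_setOf_eq, not_lt]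
    obtain ⟨n, hn⟩ := exists_nat_gt (ξ ω)
    exact ⟨n, hn.le⟩
  have htend : Tendsto (P ∘ s) atTop (nhds 0) := by
    have := tendsto_measure_iInter_atTop (μ := P)
      (fun n => (hsmeas n).nullMeasurableSet) hanti ⟨0, measure_ne_top _ _⟩
    rwa [hiInter, measure_empty] at this
  have hev : ∀ᶠ n in atTop, P (s n) < ENNReal.ofReal β :=
    htend.eventually (gt_mem_nhds (by simp [ENNReal.ofReal_pos.mpr hβ0]))
  obtain ⟨N, hN⟩ := eventually_atTop.mp hev
  have key : ∀ c : ℝ,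
      sInf ((fun r : ℝ => (r : EReal)) ''
        ((fun Y => ∫ ω, ξ ω * Y ω ∂P) '' H2 P ξ (cvar P β) ρ₀ {ω | ξ ω ≤ c})) = ⊥ := by
    intro c
    apply EReal_eq_bot_of_forall_le
    intro M
    -- choose n
    obtain ⟨n₀, hn₀⟩ := exists_nat_ge (max c ((-M) / (ρ₀ * β)))
    set n : ℕ := max N n₀ with hn
    have hmono : (n₀ : ℝ) ≤ (n : ℝ) := Nat.cast_le.mpr (le_max_right N n₀)
    have hnc : c ≤ (n : ℝ) := le_trans (le_trans (le_max_left _ _) hn₀) hmono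
    have hnM : (-M) / (ρ₀ * β) ≤ (n : ℝ) :=
      le_trans (le_trans (le_max_right _ _) hn₀) hmono
    have hnN : P (s n) < ENNReal.ofReal β := hN n (le_max_left _ _)
    set B : Set Ω := s n with hB
    have hBmeas : MeasurableSet B := hsmeas n
    have hp0 : 0 < P B := hgt n
    have hPBne : P B ≠ ⊤ := (measure_lt_top P B).ne
    set p' : ℝ := (P B).toReal with hp'
    have hp'0 : 0 < p' := ENNReal.toReal_pos hp0.ne' hPBne
    have hpβ : p' < β := by
      have := ENNReal.toReal_lt_of_lt_ofReal hnN
      exact this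
    set a : ℝ := ρ₀ * β / p' with ha'
    have ha : 0 < a := by positivity
    set Y : Ω → ℝ := fun ω => if ω ∈ B then -a else 0 with hY
    have hprod : (fun ω => ξ ω * Y ω) = B.indicator (fun ω => ξ ω * -a) := by
      funext ω
      rw [Set.indicator_apply]
      simp only [hY]
      split <;> simp
    have h1 : Integrable (fun ω => ξ ω * Y ω) P := by
      rw [hprod]
      exact (hξint.mul_const (-a)).indicator hBmeas
    have h2 : cvar P β Y ≤ (ρ₀ : EReal) := by
      rw [hY, cvar_indicator P B a β ha hβ0 hβ1 hp0 hpβ]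
      have : a * p' / β = ρ₀ := by
        rw [ha']
        field_simp
      rw [← hp', this]
    have h3 : ∀ᵐ ω ∂P, ω ∈ {ω | ξ ω ≤ c} → Y ω = 0 := by
      filter_upwards with ω hω
      have : ω ∉ B := by
        simp only [hB, hs, mem_setOf_eq, not_lt]
        exact le_trans hω hnc
      simp [hY, this]
    have h4 : ∀ᵐ ω ∂P, ω ∉ {ω | ξ ω ≤ c} → Y ω ≤ 0 := by
      filter_upwards with ω _
      simp only [hY]
      split
      · linarith
      · exact le_refl 0
    have hint : ∫ ω, ξ ω * Y ω ∂P ≤ M := by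
      have hIB : (n : ℝ) * p' ≤ ∫ ω in B, ξ ω ∂P :=
        setIntegral_ge_of_const_le_real hBmeas hPBne
          (fun ω hω => le_of_lt hω) hξint.integrableOn
      have : ∫ ω, ξ ω * Y ω ∂P = (∫ ω in B, ξ ω ∂P) * -a := by
        rw [hprod, integral_indicator hBmeas, integral_mul_const]
      rw [this]
      have h5 : (∫ ω in B, ξ ω ∂P) * -a ≤ ((n : ℝ) * p') * -a := by
        apply mul_le_mul_of_nonpos_right hIB (by linarith)
      have h6 : ((n : ℝ) * p') * -a = -(ρ₀ * β * n) := by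
        rw [ha']
        field_simp
      have h7 : -(ρ₀ * β * n) ≤ M := by
        rw [div_le_iff₀ (by positivity)] at hnM
        linarith
      linarith
    have hmem : ((∫ ω, ξ ω * Y ω ∂P : ℝ) : EReal) ∈
        ((fun r : ℝ => (r : EReal)) ''
          ((fun Y => ∫ ω, ξ ω * Y ω ∂P) '' H2 P ξ (cvar P β) ρ₀ {ω | ξ ω ≤ c})) :=
      ⟨_, ⟨Y, ⟨h1, h2, h3, h4⟩, rfl⟩, rfl⟩
    exact le_trans (sInf_le hmem) (EReal.coe_le_coe_iff.mpr hint)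
  exact ⟨fun c _ => key c, ⟨{ω | ξ ω ≤ 0}, hξm measurableSet_Iic, key 0⟩⟩
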